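/- Let F be an NRC field (the squaring map on F is not surjective) and let S be a weakly triangularizable linear subspace of End(V), where V is an n-dimensional F-vector space with n > 0. Then there exists a vector x ∈ V \ {0} such that S contains no nonzero operator with range Fx and trace zero. -/

import Mathlib

universe u

section Aux
open Module LinearMap Submodule
variable {F : Type*} [Field F]

lemma aux_trace_F (g : F →ₗ[F] F) : LinearMap.trace F F g = g 1 := by
  rw [LinearMap.trace_eq_matrix_trace F (Basis.singleton Unit F) g]
  simp [Matrix.trace, LinearMap.toMatrix_apply]

lemma aux_apply_eq_trace_smul {V : Type u} [AddCommGroup V] [Module F V] [FiniteDimensional F V]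
    (u : Module.End F V) (x : V) (hx : x ≠ 0)
    (hr : LinearMap.range u ≤ Submodule.span F {x}) :
    u x = (LinearMap.trace F V u) • x := by
  set e := LinearEquiv.toSpanNonzeroSingleton F V x hx with he
  set φ : V →ₗ[F] F :=
    e.symm.toLinearMap ∘ₗ u.codRestrict (Submodule.span F {x})
      (fun v => hr (LinearMap.mem_range_self u v)) with hφ
  have hu : u = (LinearMap.toSpanSingleton F V x) ∘ₗ φ := by
    ext v
    have h1 : e (φ v) = ⟨u v, hr (LinearMap.mem_range_self u v)⟩ := by
      simp [hφ, LinearMap.codRestrict]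
    have h2 : ((e (φ v) : Submodule.span F {x}) : V) = (φ v) • x := by
      rw [he]; simp
    rw [h1] at h2
    simp only [LinearMap.comp_apply, LinearMap.toSpanSingleton_apply]
    simpa using h2
  have htr : LinearMap.trace F V u = φ x := by
    conv_lhs => rw [hu]
    rw [LinearMap.trace_comp_comm' (R := F) φ (LinearMap.toSpanSingleton F V x)]
    rw [aux_trace_F]
    simp [LinearMap.toSpanSingleton_apply]
  conv_lhs => rw [hu]
  rw [htr]
  simp [LinearMap.toSpanSingleton_apply]

end Aux





section Pair
open Module LinearMap Submodule
variable {F : Type*} [Field F] {V : Type u} [AddCommGroup V] [Module F V] [FiniteDimensional F V]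


lemma aux_pair {n : ℕ}
    (hNRC : ¬ Function.Surjective fun x : F => x ^ 2)
    (S : Submodule F (Module.End F V))
    (hS : ∀ u ∈ S, ∃ b : Basis (Fin n) F V,
      ((LinearMap.toMatrix b b) u).BlockTriangular _root_.id)
    {u v : Module.End F V} (hu : u ∈ S) (hv : v ∈ S)
    {x y : V} (hx : x ≠ 0) (hy : y ≠ 0)
    (htu : LinearMap.trace F V u = 0) (htv : LinearMap.trace F V v = 0)
    (hru : LinearMap.range u ≤ Submodule.span F {x})
    (hrv : LinearMap.range v ≤ Submodule.span F {y})
    (huy : u y ≠ 0) (hvx : v x ≠ 0) : False := by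
  classical
  obtain ⟨c, hcex⟩ := not_forall.mp hNRC
  have hc : ∀ s : F, s ^ 2 ≠ c := fun s h => hcex ⟨s, h⟩
  obtain ⟨a, ha⟩ := Submodule.mem_span_singleton.mp (hru (LinearMap.mem_range_self u y))
  obtain ⟨b, hb⟩ := Submodule.mem_span_singleton.mp (hrv (LinearMap.mem_range_self v x))
  have ha0 : a ≠ 0 := by rintro rfl; rw [← ha, zero_smul] at huy; exact huy rfl
  have hb0 : b ≠ 0 := by rintro rfl; rw [← hb, zero_smul] at hvx; exact hvx rfl
  set d := c / (a * b) with hd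
  set w := u + d • v with hw
  have hwS : w ∈ S := S.add_mem hu (S.smul_mem d hv)
  have hux : u x = 0 := by
    rw [aux_apply_eq_trace_smul u x hx hru, htu, zero_smul]
  have hvy : v y = 0 := by
    rw [aux_apply_eq_trace_smul v y hy hrv, htv, zero_smul]
  have hwx : w x = (d * b) • y := by
    rw [hw]; simp only [LinearMap.add_apply, LinearMap.smul_apply, hux, ← hb, zero_add,
      smul_smul]
  have hwy : w y = a • x := by
    rw [hw]; simp only [LinearMap.add_apply, LinearMap.smul_apply, hvy, ← ha, smul_zero,
      add_zero]
  have hkey : w (w x) = c • x := by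
    rw [hwx, map_smul, hwy, smul_smul]
    congr 1
    rw [hd]
    field_simp
  obtain ⟨bs, hbs⟩ := hS w hwS
  set M := LinearMap.toMatrix bs bs w with hM
  set f : Module.End F V := w * w - c • (1 : Module.End F V) with hf
  have hfx : f x = 0 := by
    rw [hf]
    simp only [LinearMap.sub_apply, LinearMap.smul_apply, Module.End.mul_apply,
      Module.End.one_apply, hkey, sub_self]
  set T : Matrix (Fin n) (Fin n) F := M * M - c • 1 with hT
  have hTmat : T = LinearMap.toMatrix bs bs f := by
    rw [hf, map_sub, map_smul, LinearMap.toMatrix_one, LinearMap.toMatrix_mul, hT, hM]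
  have hdet : T.det = 0 := by
    apply Matrix.exists_mulVec_eq_zero_iff.mp
    refine ⟨⇑(bs.repr x), ?_, ?_⟩
    · intro h
      apply hx
      have : bs.repr x = 0 := by ext i; exact congrFun h i
      exact bs.repr.map_eq_zero_iff.mp this
    · rw [hTmat, LinearMap.toMatrix_mulVec_repr, hfx]
      simp
  have hTtri : T.BlockTriangular _root_.id := by
    apply (hbs.mul hbs).sub
    intro i j hij
    have h1 : (1 : Matrix (Fin n) (Fin n) F) i j = 0 := Matrix.one_apply_ne (ne_of_lt hij).symm
    simp [Matrix.smul_apply, h1]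
  have hprod : ∏ i, T i i = 0 := by
    rw [← Matrix.det_of_upperTriangular hTtri]; exact hdet
  obtain ⟨i, -, hi⟩ := Finset.prod_eq_zero_iff.mp hprod
  have hsum : ∑ j, M i j * M j i = M i i * M i i := by
    apply Finset.sum_eq_single i
    · intro j _ hj
      rcases lt_or_gt_of_ne hj with h | h
      · rw [hbs h, zero_mul]
      · rw [hbs h, mul_zero]
    · intro h; exact absurd (Finset.mem_univ i) h
  have hTii : T i i = M i i * M i i - c := by
    rw [hT]
    simp only [Matrix.sub_apply, Matrix.smul_apply, Matrix.one_apply_eq, Matrix.mul_apply,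
      smul_eq_mul, mul_one, hsum]
  exact hc (M i i) (by rw [sq]; linear_combination hi - hTii)
end Pair





section Cover
open Module LinearMap Submodule
variable {F : Type*} [Field F] {V : Type u} [AddCommGroup V] [Module F V]

lemma aux_avoid [Infinite F] (T : Finset (Submodule F V)) (hT : ∀ p ∈ T, p ≠ ⊤) :
    ∃ x : V, ∀ p ∈ T, x ∉ p := by
  classical
  induction T using Finset.induction_on with
  | empty => exact ⟨0, by simp⟩
  | @insert p T hpT IH =>
    obtain ⟨x, hx⟩ := IH (fun q hq => hT q (Finset.mem_insert_of_mem hq))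
    have hptop := hT p (Finset.mem_insert_self p T)
    obtain ⟨y, hy⟩ : ∃ y, y ∉ p := by
      by_contra h
      push_neg at h
      exact hptop (Submodule.eq_top_iff'.mpr h)
    have hsub : ∀ q : Submodule F V, (x ∉ q ∨ y ∉ q) →
        {t : F | x + t • y ∈ q}.Subsingleton := by
      intro q hq t ht t' ht'
      by_contra hne
      have hdy : (t - t') • y ∈ q := by
        have h := q.sub_mem ht ht'
        have heq : (x + t • y) - (x + t' • y) = (t - t') • y := by
          rw [sub_smul]; abel
        rwa [heq] at h
      have hyq : y ∈ q := by
        have h2 := q.smul_mem (t - t')⁻¹ hdy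
        rwa [smul_smul, inv_mul_cancel₀ (sub_ne_zero.mpr hne), one_smul] at h2
      have hxq : x ∈ q := by
        have h3 := q.sub_mem ht (q.smul_mem t hyq)
        simpa using h3
      rcases hq with h | h
      · exact h hxq
      · exact h hyq
    set bad : Set F := {t | x + t • y ∈ p} ∪ ⋃ q ∈ (T : Set (Submodule F V)), {t | x + t • y ∈ q}
      with hbad
    have hbadfin : bad.Finite := by
      apply Set.Finite.union
      · exact Set.Subsingleton.finite (hsub p (Or.inr hy))
      · exact Set.Finite.biUnion T.finite_toSet
          (fun q hq => Set.Subsingleton.finite (hsub q (Or.inl (hx q hq))))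
    obtain ⟨t, ht⟩ := (hbadfin.infinite_compl).nonempty
    refine ⟨x + t • y, ?_⟩
    intro q hq hmem
    rcases Finset.mem_insert.mp hq with rfl | hq'
    · exact ht (Or.inl hmem)
    · exact ht (Or.inr (Set.mem_biUnion hq' hmem))

end Cover

section Inf
open Module LinearMap Submodule
variable {F : Type*} [Field F]

lemma aux_inf [Infinite F] :
    ∀ (n : ℕ) (V : Type u) [AddCommGroup V] [Module F V],
      ∀ [FiniteDimensional F V] [Nontrivial V],
      finrank F V = n →
      ∀ (E : Finset (Submodule F V)),
      (∀ p ∈ E, p ≠ ⊤) →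
      ∀ (H : V → Submodule F V),
      (∀ x : V, x ≠ 0 → (∀ p ∈ E, x ∉ p) → x ∈ H x) →
      (∀ x : V, x ≠ 0 → (∀ p ∈ E, x ∉ p) → finrank F ↥(H x) + 1 = n) →
      (∀ x y : V, x ≠ 0 → y ≠ 0 → (∀ p ∈ E, x ∉ p) → (∀ p ∈ E, y ∉ p) →
        y ∈ H x ∨ x ∈ H y) →
      False := by
  intro n
  induction n using Nat.strong_induction_on with
  | _ n IH =>
    intro V _ _ _ _ hdim E hE H hmem hhyp hpair
    classical
    have hbotTop : (⊥ : Submodule F V) ≠ ⊤ := by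
      intro h
      obtain ⟨z, hz⟩ := exists_ne (0 : V)
      exact hz (by simpa using (h ▸ Submodule.mem_top : z ∈ (⊥ : Submodule F V)))
    obtain ⟨v, hv⟩ := aux_avoid (insert ⊥ E) (by
      intro p hp
      rcases Finset.mem_insert.mp hp with rfl | hp'
      · exact hbotTop
      · exact hE p hp')
    have hv0 : v ≠ 0 := fun h => hv ⊥ (Finset.mem_insert_self _ _) (by simp [h])
    have hvE : ∀ p ∈ E, v ∉ p := fun p hp => hv p (Finset.mem_insert_of_mem hp)
    set K := H v with hK
    have hKrank : finrank F ↥K + 1 = n := hhyp v hv0 hvE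
    have hvK : v ∈ K := hmem v hv0 hvE
    rcases Nat.lt_or_ge n 2 with hn1 | hn2
    · -- n = 1 : K = ⊥ but v ∈ K
      have : finrank F ↥K = 0 := by omega
      have hKbot : K = ⊥ := Submodule.finrank_eq_zero.mp this
      rw [hKbot] at hvK
      exact hv0 (by simpa using hvK)
    · -- n ≥ 2
      have hKtop : K ≠ ⊤ := by
        intro h
        rw [h, finrank_top, hdim] at hKrank
        omega
      obtain ⟨w, hw⟩ := aux_avoid (insert K E) (by
        intro p hp
        rcases Finset.mem_insert.mp hp with rfl | hp'
        · exact hKtop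
        · exact hE p hp')
      have hwK : w ∉ K := hw K (Finset.mem_insert_self _ _)
      have hw0 : w ≠ 0 := fun h => hwK (h ▸ K.zero_mem)
      have hwE : ∀ p ∈ E, w ∉ p := fun p hp => hw p (Finset.mem_insert_of_mem hp)
      have hwHrank : finrank F ↥(H w) + 1 = n := hhyp w hw0 hwE
      have hwHmem : w ∈ H w := hmem w hw0 hwE
      haveI : Nontrivial ↥K := Module.nontrivial_of_finrank_pos
        (R := F) (M := ↥K) (by omega)
      set E' : Finset (Submodule F ↥K) :=
        (insert (H w) E).image (fun p => Submodule.comap K.subtype p) with hE'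
      have hE'avoid : ∀ (z : ↥K), (∀ p ∈ E', z ∉ p) →
          ((z : V) ∉ H w ∧ ∀ p ∈ E, (z : V) ∉ p) := by
        intro z hz
        constructor
        · intro hmemw
          exact hz _ (Finset.mem_image_of_mem _ (Finset.mem_insert_self _ _)) hmemw
        · intro p hp hmemp
          exact hz _ (Finset.mem_image_of_mem _ (Finset.mem_insert_of_mem hp)) hmemp
      apply IH (finrank F ↥K) (by omega) ↥K rfl E' ?_ (fun z => Submodule.comap K.subtype (H (z : V))) ?_ ?_ ?_
      · -- E' proper
        intro p hp
        obtain ⟨p', hp', rfl⟩ := Finset.mem_image.mp hp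
        intro htop
        have hle : K ≤ p' := Submodule.comap_subtype_eq_top.mp htop
        rcases Finset.mem_insert.mp hp' with heq | hp''
        · -- p' = H w : then K = H w, so w ∈ K
          rw [heq] at hle
          have : K = H w := Submodule.eq_of_le_of_finrank_le hle (by omega)
          exact hwK (this ▸ hwHmem)
        · exact hvE p' hp'' (hle hvK)
      · -- mem
        intro z hz0 hzE'
        obtain ⟨hz1, hz2⟩ := hE'avoid z hzE'
        have : (z : V) ≠ 0 := fun h => hz0 (Subtype.ext h)
        exact hmem (z : V) this hz2
      · -- hyperplane rank
        intro z hz0 hzE'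
        obtain ⟨hz1, hz2⟩ := hE'avoid z hzE'
        have hz0' : (z : V) ≠ 0 := fun h => hz0 (Subtype.ext h)
        have hzK : (z : V) ∈ K := z.2
        have hwz : w ∈ H (z : V) := by
          rcases hpair (z : V) w hz0' hw0 hz2 hwE with h | h
          · exact h
          · exact absurd h hz1
        have hzrank : finrank F ↥(H (z : V)) + 1 = n := hhyp (z : V) hz0' hz2
        set A := H (z : V) with hA
        have hKA : K ≠ A := fun h => hwK (h ▸ hwz)
        have hlt : K < K ⊔ A := by
          refine lt_of_le_of_ne le_sup_left (fun h => hKA ?_)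
          have hAle : A ≤ K := le_sup_right.trans h.ge
          exact (Submodule.eq_of_le_of_finrank_le hAle (by omega)).symm
        have hsupn : finrank F ↥(K ⊔ A) = n := by
          have h1 : finrank F ↥(K ⊔ A) ≤ n := by
            rw [← hdim]; exact Submodule.finrank_le _
          have h2 := Submodule.finrank_lt_finrank_of_lt hlt
          omega
        have hsum := Submodule.finrank_sup_add_finrank_inf_eq K A
        have hcomap : finrank F ↥(Submodule.comap K.subtype A) = finrank F ↥(K ⊓ A) := by
          have := (Submodule.equivMapOfInjective K.subtype
            (Submodule.injective_subtype K) (Submodule.comap K.subtype A)).finrank_eq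
          rw [this, Submodule.map_comap_subtype]
        rw [hcomap]
        omega
      · -- pair
        intro z z' hz0 hz'0 hzE' hz'E'
        obtain ⟨hz1, hz2⟩ := hE'avoid z hzE'
        obtain ⟨hz'1, hz'2⟩ := hE'avoid z' hz'E'
        have hz0' : (z : V) ≠ 0 := fun h => hz0 (Subtype.ext h)
        have hz'0' : (z' : V) ≠ 0 := fun h => hz'0 (Subtype.ext h)
        rcases hpair (z : V) (z' : V) hz0' hz'0' hz2 hz'2 with h | h
        · exact Or.inl h
        · exact Or.inr h

end Inf





section Fin
open Module LinearMap Submodule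
variable {F : Type*} [Field F] {V : Type u} [AddCommGroup V] [Module F V]

lemma aux_fin [Finite F] [FiniteDimensional F V] [Nontrivial V]
    (H : V → Submodule F V)
    (hmem : ∀ x : V, x ≠ 0 → x ∈ H x)
    (hhyp : ∀ x : V, x ≠ 0 → finrank F ↥(H x) + 1 = finrank F V)
    (hpair : ∀ x y : V, x ≠ 0 → y ≠ 0 → y ∈ H x ∨ x ∈ H y) :
    False := by
  classical
  haveI : Fintype F := Fintype.ofFinite F
  haveI : Finite V := by
    have e := (Module.finBasis F V).equivFun
    exact Finite.of_equiv _ e.symm.toEquiv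
  haveI : Fintype V := Fintype.ofFinite V
  set q := Fintype.card F with hqdef
  set m := finrank F V with hmdef
  set N := Fintype.card V with hNdef
  have hq2 : 2 ≤ q := Fintype.one_lt_card
  have hm1 : 1 ≤ m := by
    rw [hmdef]
    exact finrank_pos
  have hN : N = q ^ m := card_eq_pow_finrank
  set h := q ^ (m - 1) with hhdef
  have hh1 : 1 ≤ h := Nat.one_le_pow _ _ (by omega)
  have hNq : N = h * q := by
    rw [hN, hhdef, ← pow_succ]
    congr 1
    omega
  have hfilter : ∀ x : V, x ≠ 0 →
      (Finset.univ.filter (fun y => y ∈ H x)).card = h := by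
    intro x hx
    haveI : Fintype ↥(H x) := Fintype.ofFinite _
    have h1 : Fintype.card ↥(H x) = (Finset.univ.filter (fun y => y ∈ H x)).card :=
      Fintype.card_of_subtype _ (by simp)
    rw [← h1]
    have h3 : Fintype.card ↥(H x) = q ^ (finrank F ↥(H x)) := card_eq_pow_finrank
    rw [h3, hhdef]
    congr 1
    have := hhyp x hx
    omega
  set s : Finset V := Finset.univ.filter (fun x => x ≠ 0) with hs
  have hscard : s.card = N - 1 := by
    rw [hs]
    have : Finset.univ.filter (fun x : V => x ≠ 0) = Finset.univ.erase 0 := by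
      ext z
      simp [Finset.mem_erase]
    rw [this, Finset.card_erase_of_mem (Finset.mem_univ _), Finset.card_univ]
  set A : Finset (V × V) :=
    Finset.univ.filter (fun p : V × V => p.1 ≠ 0 ∧ p.2 ∉ H p.1) with hA
  have hswap : ∀ p ∈ A, Prod.swap p ∉ A := by
    intro p hp hps
    rw [hA, Finset.mem_filter] at hp hps
    obtain ⟨-, h1, h2⟩ := hp
    obtain ⟨-, h3, h4⟩ := hps
    have hp2 : p.2 ≠ 0 := fun hz => h2 (hz ▸ (H p.1).zero_mem)
    rcases hpair p.1 p.2 h1 hp2 with h5 | h5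
    · exact h2 h5
    · exact h4 h5
  have hsub1 : A ⊆ s ×ˢ s := by
    intro p hp
    rw [hA, Finset.mem_filter] at hp
    obtain ⟨-, h1, h2⟩ := hp
    have hp2 : p.2 ≠ 0 := fun hz => h2 (hz ▸ (H p.1).zero_mem)
    rw [Finset.mem_product]
    constructor <;> (rw [hs, Finset.mem_filter]; exact ⟨Finset.mem_univ _, by assumption⟩)
  have hsub2 : A.image Prod.swap ⊆ s ×ˢ s := by
    intro p hp
    obtain ⟨p', hp', rfl⟩ := Finset.mem_image.mp hp
    have := hsub1 hp'
    rw [Finset.mem_product] at this ⊢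
    exact ⟨this.2, this.1⟩
  have hdisj : Disjoint A (A.image Prod.swap) := by
    rw [Finset.disjoint_left]
    intro p hp hp'
    obtain ⟨p', hp'A, hpe⟩ := Finset.mem_image.mp hp'
    apply hswap p' hp'A
    rw [hpe]
    exact hp
  have hcard2 : A.card + A.card ≤ (N - 1) * (N - 1) := by
    calc A.card + A.card
        = (A ∪ A.image Prod.swap).card := by
          rw [Finset.card_union_of_disjoint hdisj,
            Finset.card_image_of_injective _ Prod.swap_injective]
      _ ≤ (s ×ˢ s).card := Finset.card_le_card (Finset.union_subset hsub1 hsub2)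
      _ = (N - 1) * (N - 1) := by rw [Finset.card_product, hscard]
  have hAeq : A = s.biUnion
      (fun x => (Finset.univ.filter (fun y => y ∉ H x)).image (fun y => (x, y))) := by
    ext p
    rw [hA, Finset.mem_filter, Finset.mem_biUnion]
    constructor
    · rintro ⟨-, h1, h2⟩
      refine ⟨p.1, by rw [hs, Finset.mem_filter]; exact ⟨Finset.mem_univ _, h1⟩, ?_⟩
      rw [Finset.mem_image]
      exact ⟨p.2, by rw [Finset.mem_filter]; exact ⟨Finset.mem_univ _, h2⟩, rfl⟩
    · rintro ⟨x, hxs, hmem'⟩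
      rw [Finset.mem_image] at hmem'
      obtain ⟨y, hy, rfl⟩ := hmem'
      rw [Finset.mem_filter] at hy
      rw [hs, Finset.mem_filter] at hxs
      exact ⟨Finset.mem_univ _, hxs.2, hy.2⟩
  have hAcard : A.card = (N - 1) * (N - h) := by
    rw [hAeq, Finset.card_biUnion]
    · rw [← hscard]
      rw [Finset.sum_congr rfl (g := fun _ => N - h) ?_]
      · rw [Finset.sum_const, smul_eq_mul]
      · intro x hx
        rw [hs, Finset.mem_filter] at hx
        rw [Finset.card_image_of_injective _ (fun a b hab => congrArg Prod.snd hab)]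
        have : Finset.univ.filter (fun y => y ∉ H x)
            = Finset.univ \ Finset.univ.filter (fun y => y ∈ H x) := by
          ext z
          simp
        rw [this, Finset.card_sdiff_of_subset (Finset.filter_subset _ _), Finset.card_univ,
          hfilter x hx.2]
    · intro x hx y hy hxy
      rw [Function.onFun, Finset.disjoint_left]
      intro p hp1 hp2
      rw [Finset.mem_image] at hp1 hp2
      obtain ⟨a, -, ha⟩ := hp1
      obtain ⟨b, -, hb⟩ := hp2
      apply hxy
      rw [← ha] at hb
      exact (congrArg Prod.fst hb).symm
  -- final numeric contradiction
  have hN2 : 2 ≤ N := Fintype.one_lt_card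
  have h2h : 2 * h ≤ N := by
    rw [hNq]
    calc 2 * h = h * 2 := by ring
      _ ≤ h * q := Nat.mul_le_mul_left h hq2
  have hBpos : 0 < N - 1 := by omega
  have hkey : 2 * (N - h) ≤ N - 1 := by
    have hmul : (N - 1) * (2 * (N - h)) ≤ (N - 1) * (N - 1) := by
      calc (N - 1) * (2 * (N - h)) = (N - 1) * (N - h) + (N - 1) * (N - h) := by ring
        _ = A.card + A.card := by rw [hAcard]
        _ ≤ (N - 1) * (N - 1) := hcard2
    exact Nat.le_of_mul_le_mul_left hmul hBpos
  omega
end Fin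


theorem stmt_18 {F V : Type*} [Field F] [AddCommGroup V] [Module F V]
    [FiniteDimensional F V] {n : ℕ} (hn : 0 < n)
    (hdim : Module.finrank F V = n)
    (hNRC : ¬ Function.Surjective fun x : F => x ^ 2)
    (S : Submodule F (Module.End F V))
    (hS : ∀ u ∈ S, ∃ b : Module.Basis (Fin n) F V,
      ((LinearMap.toMatrix b b) u).BlockTriangular id) :
    ∃ x : V, x ≠ 0 ∧ ∀ u ∈ S,
      ¬ (LinearMap.trace F V u = 0 ∧ u ≠ 0 ∧
        LinearMap.range u = Submodule.span F {x}) := by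
  classical
  by_contra hcon
  push_neg at hcon
  choose! uf hprop using hcon
  haveI : Nontrivial V := Module.nontrivial_of_finrank_pos (R := F)
    (by rw [hdim]; exact hn)
  set H : V → Submodule F V := fun x => LinearMap.ker (uf x) with hH
  have hrange : ∀ x : V, x ≠ 0 →
      LinearMap.range (uf x) ≤ Submodule.span F {x} :=
    fun x hx => ((hprop x hx).2.2.2).le
  have htr : ∀ x : V, x ≠ 0 → LinearMap.trace F V (uf x) = 0 :=
    fun x hx => (hprop x hx).2.1
  have hmem : ∀ x : V, x ≠ 0 → x ∈ H x := by
    intro x hx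
    have h0 := aux_apply_eq_trace_smul (uf x) x hx (hrange x hx)
    rw [htr x hx, zero_smul] at h0
    exact LinearMap.mem_ker.mpr h0
  have hhyp : ∀ x : V, x ≠ 0 →
      Module.finrank F ↥(H x) + 1 = Module.finrank F V := by
    intro x hx
    have h1 := LinearMap.finrank_range_add_finrank_ker (uf x)
    rw [(hprop x hx).2.2.2, finrank_span_singleton hx] at h1
    have h2 : Module.finrank F ↥(H x) = Module.finrank F ↥(LinearMap.ker (uf x)) := rfl
    omega
  have hpair : ∀ x y : V, x ≠ 0 → y ≠ 0 → y ∈ H x ∨ x ∈ H y := by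
    intro x y hx hy
    by_contra hcc
    push_neg at hcc
    obtain ⟨h1, h2⟩ := hcc
    exact aux_pair hNRC S hS (hprop x hx).1 (hprop y hy).1 hx hy
      (htr x hx) (htr y hy) (hrange x hx) (hrange y hy)
      (fun h0 => h1 (LinearMap.mem_ker.mpr h0))
      (fun h0 => h2 (LinearMap.mem_ker.mpr h0))
  cases finite_or_infinite F with
  | inl _ => exact aux_fin H hmem hhyp hpair
  | inr _ =>
    exact aux_inf (Module.finrank F V) V rfl ∅
      (fun p hp => absurd hp (Finset.notMem_empty p)) H
      (fun x hx _ => hmem x hx) (fun x hx _ => hhyp x hx)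
      (fun x y hx hy _ _ => hpair x y hx hy)
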